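/- Let E be a Riesz space and let p, q : ℕ → ℕ satisfy the deferred property such that the real sequence (p_n/(q_n − p_n)) is bounded. If a sequence (x_n) in E is statistical order convergent to x ∈ E, then x_n →^{D_{st_o}}_{p,q} x. -/

import Mathlib

open Filter Topology

variable {E : Type*} [AddCommGroup E] [Lattice E]
  [CovariantClass E E (· + ·) (· ≤ ·)] [Module ℝ E] [PosSMulMono ℝ E]

/-- `p` and `q` satisfy the deferred property: `p n < q n` for all `n` and `q n → ∞`. -/
def DeferredProperty (p q : ℕ → ℕ) : Prop :=
  (∀ n, p n < q n) ∧ Tendsto q atTop atTop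

open Classical in
/-- The ratio `|{k ∈ K : p n < k ≤ q n}| / (q n - p n)`. -/
noncomputable def deferredRatio (p q : ℕ → ℕ) (K : Set ℕ) (n : ℕ) : ℝ :=
  (((Finset.Ioc (p n) (q n)).filter (fun k => k ∈ K)).card : ℝ) / ((q n : ℝ) - (p n : ℝ))

/-- The deferred density of `K ⊆ ℕ` is `a`. -/
def DeferredDensity (p q : ℕ → ℕ) (K : Set ℕ) (a : ℝ) : Prop :=
  Tendsto (deferredRatio p q K) atTop (nhds a)

/-- `z` is deferred statistical order decreasing to `0`: there is an (infinite) set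
`K = {k₁ < k₂ < ⋯}` of deferred density one along which `z` is decreasing with infimum `0`. -/
def DStatDecreasing (p q : ℕ → ℕ) (z : ℕ → E) : Prop :=
  ∃ K : Set ℕ, K.Infinite ∧ DeferredDensity p q K 1 ∧
    (∀ i ∈ K, ∀ j ∈ K, i ≤ j → z j ≤ z i) ∧ IsGLB (z '' K) 0

/-- `x` is deferred statistical order convergent to `l`. -/
def DStatOrderConv (p q : ℕ → ℕ) (x : ℕ → E) (l : E) : Prop :=
  ∃ z : ℕ → E, DStatDecreasing p q z ∧
    ∃ K : Set ℕ, K.Infinite ∧ DeferredDensity p q K 1 ∧ ∀ k ∈ K, |x k - l| ≤ z k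

open Classical in
/-- The natural density of `K ⊆ ℕ` is `a`. -/
def NatDensity (K : Set ℕ) (a : ℝ) : Prop :=
  Tendsto (fun n => (((Finset.Iic n).filter (fun k => k ∈ K)).card : ℝ) / (n : ℝ))
    atTop (nhds a)

/-- `z` is statistical order decreasing to `0`. -/
def StatDecreasing (z : ℕ → E) : Prop :=
  ∃ K : Set ℕ, K.Infinite ∧ NatDensity K 1 ∧
    (∀ i ∈ K, ∀ j ∈ K, i ≤ j → z j ≤ z i) ∧ IsGLB (z '' K) 0

/-- `x` is statistical order convergent to `l`. -/
def StatOrderConv (x : ℕ → E) (l : E) : Prop :=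
  ∃ z : ℕ → E, StatDecreasing z ∧
    ∃ K : Set ℕ, K.Infinite ∧ NatDensity K 1 ∧ ∀ k ∈ K, |x k - l| ≤ z k

open Classical in
lemma natDensity_to_deferred (p q : ℕ → ℕ) (hpq : DeferredProperty p q)
    (hbdd : ∃ C : ℝ, ∀ n, (p n : ℝ) / ((q n : ℝ) - (p n : ℝ)) ≤ C)
    {K : Set ℕ} (hK : NatDensity K 1) : DeferredDensity p q K 1 := by
  obtain ⟨C, hC⟩ := hbdd
  obtain ⟨hlt, hq⟩ := hpq
  have hA : Tendsto (fun n => (((Finset.Iic n).filter (fun k => k ∈ K)).card : ℝ) / (n : ℝ))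
      atTop (nhds 1) := hK
  set M : ℕ → ℝ := fun n => (((Finset.Iic n).filter (fun k => k ∉ K)).card : ℝ) with hMdef
  have hAM : ∀ n : ℕ, (((Finset.Iic n).filter (fun k => k ∈ K)).card : ℝ) + M n
      = (n : ℝ) + 1 := by
    intro n
    have h := Finset.card_filter_add_card_filter_not
      (s := Finset.Iic n) (p := fun k => k ∈ K)
    have h2 : ((Finset.Iic n).filter (fun k => k ∈ K)).card
        + ((Finset.Iic n).filter (fun k => k ∉ K)).card = n + 1 := by
      simpa [Nat.card_Iic] using h
    simp only [hMdef]
    exact_mod_cast h2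
  have hM0 : Tendsto (fun n => M n / (n : ℝ)) atTop (nhds 0) := by
    have heq : ∀ᶠ n : ℕ in atTop, M n / (n : ℝ)
        = (1 + 1 / (n : ℝ)) - (((Finset.Iic n).filter (fun k => k ∈ K)).card : ℝ) / (n : ℝ) := by
      filter_upwards [eventually_ge_atTop 1] with n hn
      have hn0 : (n : ℝ) ≠ 0 := by
        have : (1 : ℝ) ≤ (n : ℝ) := by exact_mod_cast hn
        linarith
      have := hAM n
      field_simp
      linarith
    rw [tendsto_congr' heq]
    have h : Tendsto (fun n : ℕ => (1 + 1 / (n : ℝ))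
        - (((Finset.Iic n).filter (fun k => k ∈ K)).card : ℝ) / (n : ℝ))
        atTop (nhds ((1 + 0) - 1)) :=
      (tendsto_const_nhds.add tendsto_one_div_atTop_nhds_zero_nat).sub hA
    simpa using h
  have hMq : Tendsto (fun n => M (q n) / (q n : ℝ)) atTop (nhds 0) := hM0.comp hq
  -- the "misses" in the deferred window
  set miss : ℕ → ℝ :=
    fun n => (((Finset.Ioc (p n) (q n)).filter (fun k => k ∉ K)).card : ℝ) with hmissdef
  have hd : ∀ n, (0 : ℝ) < (q n : ℝ) - (p n : ℝ) := by
    intro n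
    have : (p n : ℝ) < (q n : ℝ) := by exact_mod_cast hlt n
    linarith
  have hqpos : ∀ n, (0 : ℝ) < (q n : ℝ) := by
    intro n
    have h0 : (0 : ℝ) ≤ (p n : ℝ) := by positivity
    linarith [hd n]
  have hmiss0 : Tendsto (fun n => miss n / ((q n : ℝ) - (p n : ℝ))) atTop (nhds 0) := by
    apply squeeze_zero (g := fun n => (M (q n) / (q n : ℝ)) * (1 + C))
    · intro n
      exact div_nonneg (by positivity) (hd n).le
    · intro n
      have hsub : miss n ≤ M (q n) := by
        have : ((Finset.Ioc (p n) (q n)).filter (fun k => k ∉ K))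
            ⊆ ((Finset.Iic (q n)).filter (fun k => k ∉ K)) :=
          Finset.filter_subset_filter _ Finset.Ioc_subset_Iic_self
        simp only [hmissdef, hMdef]
        exact_mod_cast Finset.card_le_card this
      have h1 : miss n / ((q n : ℝ) - (p n : ℝ)) ≤ M (q n) / ((q n : ℝ) - (p n : ℝ)) := by
        gcongr
        exact (hd n).le
      have hMnn : (0 : ℝ) ≤ M (q n) := by positivity
      have h2 : M (q n) / ((q n : ℝ) - (p n : ℝ))
          = (M (q n) / (q n : ℝ)) * ((q n : ℝ) / ((q n : ℝ) - (p n : ℝ))) := by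
        rw [div_mul_div_comm, mul_comm (M (q n)) ((q n : ℝ)),
          mul_div_mul_left _ _ (hqpos n).ne']
      have h3 : (q n : ℝ) / ((q n : ℝ) - (p n : ℝ)) ≤ 1 + C := by
        have hne : ((q n : ℝ) - (p n : ℝ)) ≠ 0 := (hd n).ne'
        have key : (q n : ℝ) / ((q n : ℝ) - (p n : ℝ))
            = 1 + (p n : ℝ) / ((q n : ℝ) - (p n : ℝ)) := by
          field_simp
          ring
        rw [key]
        linarith [hC n]
      calc miss n / ((q n : ℝ) - (p n : ℝ))
          ≤ M (q n) / ((q n : ℝ) - (p n : ℝ)) := h1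
        _ = (M (q n) / (q n : ℝ)) * ((q n : ℝ) / ((q n : ℝ) - (p n : ℝ))) := h2
        _ ≤ (M (q n) / (q n : ℝ)) * (1 + C) := by
            apply mul_le_mul_of_nonneg_left h3
            positivity
    · simpa using hMq.mul_const (1 + C)
  have heq : ∀ n, deferredRatio p q K n = 1 - miss n / ((q n : ℝ) - (p n : ℝ)) := by
    intro n
    have hcard : (((Finset.Ioc (p n) (q n)).filter (fun k => k ∈ K)).card : ℝ) + miss n
        = (q n : ℝ) - (p n : ℝ) := by
      have h := Finset.card_filter_add_card_filter_not
        (s := Finset.Ioc (p n) (q n)) (p := fun k => k ∈ K)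
      have h2 : ((Finset.Ioc (p n) (q n)).filter (fun k => k ∈ K)).card
          + ((Finset.Ioc (p n) (q n)).filter (fun k => k ∉ K)).card = q n - p n := by
        simpa [Nat.card_Ioc] using h
      calc (((Finset.Ioc (p n) (q n)).filter (fun k => k ∈ K)).card : ℝ) + miss n
          = (((((Finset.Ioc (p n) (q n)).filter (fun k => k ∈ K)).card
              + ((Finset.Ioc (p n) (q n)).filter (fun k => k ∉ K)).card) : ℕ) : ℝ) := by
            simp only [hmissdef]; push_cast; ring
        _ = ((q n - p n : ℕ) : ℝ) := by rw [h2]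
        _ = (q n : ℝ) - (p n : ℝ) := by rw [Nat.cast_sub (hlt n).le]
    have hdn := hd n
    unfold deferredRatio
    field_simp
    linarith
  have : Tendsto (fun n => 1 - miss n / ((q n : ℝ) - (p n : ℝ))) atTop (nhds 1) := by
    have h : Tendsto (fun n => (1 : ℝ) - miss n / ((q n : ℝ) - (p n : ℝ)))
        atTop (nhds (1 - 0)) := tendsto_const_nhds.sub hmiss0
    simpa using h
  unfold DeferredDensity
  rw [show deferredRatio p q K = fun n => 1 - miss n / ((q n : ℝ) - (p n : ℝ)) from funext heq]
  exact this

theorem stmt15 (p q : ℕ → ℕ) (hpq : DeferredProperty p q)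
    (hbdd : ∃ C : ℝ, ∀ n, (p n : ℝ) / ((q n : ℝ) - (p n : ℝ)) ≤ C)
    (x : ℕ → E) (l : E) (hx : StatOrderConv x l) :
    DStatOrderConv p q x l := by
  obtain ⟨z, ⟨K, hKinf, hKd, hmono, hglb⟩, K', hK'inf, hK'd, hbound⟩ := hx
  exact ⟨z, ⟨K, hKinf, natDensity_to_deferred p q hpq hbdd hKd, hmono, hglb⟩,
    K', hK'inf, natDensity_to_deferred p q hpq hbdd hK'd, hbound⟩
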